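/- arXiv:2505.07967 — 3 statements merged into one kernel-verified Lean document; each statement's English description precedes it below -/
import Mathlib

section
/- Fix m ∈ ℕ, q ∈ [1,∞], a depth L ∈ ℕ, widths (d₀ = d, d₁, …, d_L, d_{L+1} = 1), and parameters (A₀, …, A_L, b₀, …, b_{L−1}) of a RePU network g of order m. Let ‖·‖_q denote the ℓ^q→ℓ^q operator norm and let (A, b) denote A augmented with the column b. Set r_s = max{ ‖(A_s, b_s)‖_q, 1 } for 0 ≤ s ≤ L−1, and define Ã_ℓ = A_ℓ / r_ℓ and b̃_ℓ = b_ℓ / ∏_{s=0}^{ℓ} r_s^{m^{ℓ−s}} for 0 ≤ ℓ ≤ L−1, and Ã_L = A_L · ∏_{s=0}^{L−1} r_s^{m^{L−s}}. Then ‖(Ã_ℓ, b̃_ℓ)‖_q ≤ 1 for every 0 ≤ ℓ ≤ L−1, and the rescaled network computes the same function: for all x ∈ ℝ^d, Ã_L σ_m( Ã_{L−1}( ⋯ σ_m(Ã₀ x + b̃₀) ⋯ ) + b̃_{L−1} ) = A_L σ_m( A_{L−1}( ⋯ σ_m(A₀ x + b₀) ⋯ ) + b_{L−1} ). -/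
/-- RePU activation of order `m`: `σ_m(t) = (max{t,0})^m`. -/
noncomputable def repu (m : ℕ) (t : ℝ) : ℝ := (max t 0) ^ m

/-- Hidden-layer forward pass of a RePU network with architecture `arch`
(`arch 0` input units, `arch ℓ` units at layer `ℓ`), weight matrices `A` and biases `b`:
`netFwd m arch A b x ℓ` is the output of the `ℓ`-th hidden layer at input `x`. -/
noncomputable def netFwd (m : ℕ) (arch : ℕ → ℕ)
    (A : ∀ ℓ : ℕ, Matrix (Fin (arch (ℓ + 1))) (Fin (arch ℓ)) ℝ)
    (b : ∀ ℓ : ℕ, Fin (arch (ℓ + 1)) → ℝ)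
    (x : Fin (arch 0) → ℝ) : (ℓ : ℕ) → Fin (arch ℓ) → ℝ
  | 0 => x
  | ℓ + 1 => fun i => repu m ((A ℓ).mulVec (netFwd m arch A b x ℓ) i + b ℓ i)

/-- Real output of a depth-`L` RePU network (the output layer `g_L(x) = A_L x` has one
unit, `arch (L+1) = 1`; we sum the coordinates of the output vector). -/
noncomputable def netOut (m : ℕ) (arch : ℕ → ℕ)
    (A : ∀ ℓ : ℕ, Matrix (Fin (arch (ℓ + 1))) (Fin (arch ℓ)) ℝ)
    (b : ∀ ℓ : ℕ, Fin (arch (ℓ + 1)) → ℝ) (L : ℕ) (x : Fin (arch 0) → ℝ) : ℝ :=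
  ∑ i, (A L).mulVec (netFwd m arch A b x L) i

open scoped ENNReal

/-- ℓ^q norm of a vector, `q ∈ [1,∞]`. -/
noncomputable def vNorm (q : ℝ≥0∞) {n : ℕ} (v : Fin n → ℝ) : ℝ :=
  if q = ⊤ then ⨆ i, |v i| else (∑ i, |v i| ^ q.toReal) ^ (1 / q.toReal)

/-- The `ℓ^q → ℓ^q` operator norm of a matrix. -/
noncomputable def opNorm (q : ℝ≥0∞) {p r : ℕ} (A : Matrix (Fin p) (Fin r) ℝ) : ℝ :=
  sSup { t : ℝ | ∃ x : Fin r → ℝ, vNorm q x ≤ 1 ∧ t = vNorm q (A.mulVec x) }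

/-- The matrix `A` augmented with the column `b`. -/
noncomputable def augM {p r : ℕ} (A : Matrix (Fin p) (Fin r) ℝ) (b : Fin p → ℝ) :
    Matrix (Fin p) (Fin (r + 1)) ℝ :=
  Matrix.of fun i j => (Fin.snoc (A i) (b i) : Fin (r + 1) → ℝ) j

/-! ### Auxiliary lemmas -/

lemma stmt12.toReal_pos' {q : ℝ≥0∞} (hq : 1 ≤ q) (h : q ≠ ⊤) : 0 < q.toReal := by
  have := ENNReal.toReal_mono h hq; simp at this; linarith

lemma stmt12.rpow_inv_rpow' {a p : ℝ} (ha : 0 ≤ a) (hp : p ≠ 0) : (a ^ p) ^ (1 / p) = a := by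
  rw [← Real.rpow_mul ha, mul_one_div_cancel hp, Real.rpow_one]

lemma stmt12.vNorm_mono {q : ℝ≥0∞} {n : ℕ} (hq : 1 ≤ q) {v w : Fin n → ℝ}
    (h : ∀ i, |v i| ≤ |w i|) : vNorm q v ≤ vNorm q w := by
  unfold vNorm
  split
  · exact ciSup_mono (Finite.bddAbove_range _) h
  · next hne =>
    have hp := stmt12.toReal_pos' hq hne
    apply Real.rpow_le_rpow (by positivity) _ (by positivity)
    exact Finset.sum_le_sum fun i _ => Real.rpow_le_rpow (abs_nonneg _) (h i) hp.le

lemma stmt12.abs_le_vNorm {q : ℝ≥0∞} {n : ℕ} (hq : 1 ≤ q) (v : Fin n → ℝ) (j : Fin n) :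
    |v j| ≤ vNorm q v := by
  unfold vNorm
  split
  · exact le_ciSup (Finite.bddAbove_range fun i => |v i|) j
  · next hne =>
    have hp := stmt12.toReal_pos' hq hne
    calc |v j| = (|v j| ^ q.toReal) ^ (1 / q.toReal) :=
          (stmt12.rpow_inv_rpow' (abs_nonneg _) hp.ne').symm
    _ ≤ _ := Real.rpow_le_rpow (by positivity)
        (Finset.single_le_sum (f := fun i => |v i| ^ q.toReal) (fun i _ => by positivity)
          (Finset.mem_univ j)) (by positivity)

lemma stmt12.vNorm_smul {q : ℝ≥0∞} {n : ℕ} (hq : 1 ≤ q) {c : ℝ} (hc : 0 ≤ c)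
    (v : Fin n → ℝ) : vNorm q (c • v) = c * vNorm q v := by
  unfold vNorm
  split
  · simp only [Pi.smul_apply, smul_eq_mul, abs_mul, abs_of_nonneg hc]
    exact (Real.mul_iSup_of_nonneg hc _).symm
  · next hne =>
    have hp := stmt12.toReal_pos' hq hne
    have : ∀ i : Fin n, |(c • v) i| ^ q.toReal = c ^ q.toReal * |v i| ^ q.toReal := by
      intro i
      simp [abs_mul, abs_of_nonneg hc, Real.mul_rpow hc (abs_nonneg _)]
    rw [Finset.sum_congr rfl (fun i _ => this i), ← Finset.mul_sum,
      Real.mul_rpow (by positivity) (by positivity), stmt12.rpow_inv_rpow' hc hp.ne']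

lemma stmt12.bddAbove_opSet {q : ℝ≥0∞} (hq : 1 ≤ q) {p r : ℕ} (M : Matrix (Fin p) (Fin r) ℝ) :
    BddAbove {t : ℝ | ∃ x : Fin r → ℝ, vNorm q x ≤ 1 ∧ t = vNorm q (M.mulVec x)} := by
  refine ⟨vNorm q (fun i => ∑ j, |M i j|), ?_⟩
  rintro t ⟨x, hx, rfl⟩
  apply stmt12.vNorm_mono hq
  intro i
  have hxj : ∀ j, |x j| ≤ 1 := fun j => (stmt12.abs_le_vNorm hq x j).trans hx
  calc |M.mulVec x i| = |∑ j, M i j * x j| := by rw [Matrix.mulVec, dotProduct]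
  _ ≤ ∑ j, (|M i j * x j|) := Finset.abs_sum_le_sum_abs _ _
  _ ≤ ∑ j, (|M i j|) := Finset.sum_le_sum fun j _ => by
      rw [abs_mul]
      exact mul_le_of_le_one_right (abs_nonneg _) (hxj j)
  _ ≤ |∑ j, (|M i j|)| := le_abs_self _

lemma stmt12.opNorm_aug_le {q : ℝ≥0∞} (hq : 1 ≤ q) {p k : ℕ} (A : Matrix (Fin p) (Fin k) ℝ)
    (b : Fin p → ℝ) {c' : ℝ} (hc' : 1 ≤ c') :
    opNorm q (augM ((max (opNorm q (augM A b)) 1)⁻¹ • A)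
      ((c' * max (opNorm q (augM A b)) 1)⁻¹ • b)) ≤ 1 := by
  set N := augM A b with hN
  set r := max (opNorm q N) 1 with hrdef
  have hr1 : 1 ≤ r := le_max_right _ _
  have hr0 : 0 < r := lt_of_lt_of_le one_pos hr1
  have hNr : opNorm q N ≤ r := le_max_left _ _
  apply Real.sSup_le _ zero_le_one
  rintro t ⟨x, hx, rfl⟩
  set x' : Fin (k + 1) → ℝ :=
    Fin.snoc (fun j => x (Fin.castSucc j)) (c'⁻¹ * x (Fin.last k)) with hx'def
  have hkey : (augM (r⁻¹ • A) ((c' * r)⁻¹ • b)).mulVec x = r⁻¹ • (N.mulVec x') := by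
    funext i
    simp only [hN, Matrix.mulVec, dotProduct, augM, Matrix.of_apply, Pi.smul_apply,
      smul_eq_mul, Fin.sum_univ_castSucc, Fin.snoc_castSucc, Fin.snoc_last, hx'def,
      Matrix.smul_apply, Finset.mul_sum, mul_add]
    have h0 : 0 < c' := lt_of_lt_of_le one_pos hc'
    congr 1
    · exact Finset.sum_congr rfl fun j _ => by ring
    · rw [mul_inv]
      ring
  have hx'le : vNorm q x' ≤ 1 := by
    refine le_trans (stmt12.vNorm_mono hq ?_) hx
    intro j
    refine Fin.lastCases ?_ (fun j => ?_) j
    · simp [hx'def, abs_mul, abs_inv]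
      have h0 : 0 < c' := lt_of_lt_of_le one_pos hc'
      calc |c'|⁻¹ * |x (Fin.last k)| ≤ 1 * |x (Fin.last k)| := by
            apply mul_le_mul_of_nonneg_right _ (abs_nonneg _)
            rw [abs_of_pos h0]
            exact inv_le_one_of_one_le₀ hc'
      _ = _ := one_mul _
    · simp [hx'def]
  calc vNorm q ((augM (r⁻¹ • A) ((c' * r)⁻¹ • b)).mulVec x)
      = r⁻¹ * vNorm q (N.mulVec x') := by rw [hkey, stmt12.vNorm_smul hq (by positivity)]
    _ ≤ r⁻¹ * opNorm q N := by
        apply mul_le_mul_of_nonneg_left _ (by positivity)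
        exact le_csSup (stmt12.bddAbove_opSet hq N) ⟨x', hx'le, rfl⟩
    _ ≤ r⁻¹ * r := mul_le_mul_of_nonneg_left hNr (by positivity)
    _ = 1 := inv_mul_cancel₀ hr0.ne'

lemma stmt12.repu_mul (m : ℕ) {c : ℝ} (hc : 0 ≤ c) (t : ℝ) :
    repu m (c * t) = c ^ m * repu m t := by
  unfold repu
  rw [← mul_pow]
  congr 1
  rcases le_total t 0 with h | h
  · rw [max_eq_right h, max_eq_right (by nlinarith), mul_zero]
  · rw [max_eq_left h, max_eq_left (by positivity)]

lemma stmt12.prod_pow_succ (r : ℕ → ℝ) (m ℓ : ℕ) :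
    (∏ s ∈ Finset.range (ℓ + 1), r s ^ (m ^ (ℓ - s))) ^ m
      = ∏ s ∈ Finset.range (ℓ + 1), r s ^ (m ^ (ℓ + 1 - s)) := by
  rw [← Finset.prod_pow]
  refine Finset.prod_congr rfl fun s hs => ?_
  rw [← pow_mul, ← pow_succ]
  have h : ℓ - s + 1 = ℓ + 1 - s := by
    have := Finset.mem_range.mp hs; omega
  rw [h]

lemma stmt12.netFwd_rescale (m : ℕ) (arch : ℕ → ℕ)
    (A : ∀ ℓ : ℕ, Matrix (Fin (arch (ℓ + 1))) (Fin (arch ℓ)) ℝ)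
    (b : ∀ ℓ : ℕ, Fin (arch (ℓ + 1)) → ℝ)
    (r : ℕ → ℝ) (hr : ∀ s, 1 ≤ r s) (x : Fin (arch 0) → ℝ) (ℓ : ℕ) :
    netFwd m arch (fun t => (r t)⁻¹ • A t)
      (fun t => (∏ s ∈ Finset.range (t + 1), r s ^ (m ^ (t - s)))⁻¹ • b t) x ℓ
    = (∏ s ∈ Finset.range ℓ, r s ^ (m ^ (ℓ - s)))⁻¹ • netFwd m arch A b x ℓ := by
  have hrpos : ∀ s, 0 < r s := fun s => lt_of_lt_of_le one_pos (hr s)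
  have hprod : ∀ (t : ℕ) (u : ℕ → ℕ), 0 < ∏ s ∈ Finset.range t, r s ^ (u s) :=
    fun (t : ℕ) (u : ℕ → ℕ) => Finset.prod_pos fun s _ => pow_pos (hrpos s) _
  induction ℓ with
  | zero => simp [netFwd]
  | succ ℓ ih =>
    funext i
    have hc : (0:ℝ) < ∏ s ∈ Finset.range ℓ, r s ^ (m ^ (ℓ - s)) := hprod ℓ _
    have hc1 : (0:ℝ) < ∏ s ∈ Finset.range (ℓ + 1), r s ^ (m ^ (ℓ - s)) := hprod (ℓ+1) _
    simp only [netFwd, ih, Pi.smul_apply, smul_eq_mul]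
    rw [Matrix.smul_mulVec, Matrix.mulVec_smul]
    simp only [Pi.smul_apply, smul_eq_mul]
    have hsplit : (∏ s ∈ Finset.range (ℓ + 1), r s ^ (m ^ (ℓ - s)))
        = (∏ s ∈ Finset.range ℓ, r s ^ (m ^ (ℓ - s))) * r ℓ := by
      rw [Finset.prod_range_succ, Nat.sub_self, pow_zero, pow_one]
    have harg : (r ℓ)⁻¹ * ((∏ s ∈ Finset.range ℓ, r s ^ (m ^ (ℓ - s)))⁻¹
          * (A ℓ).mulVec (netFwd m arch A b x ℓ) i)
        + (∏ s ∈ Finset.range (ℓ + 1), r s ^ (m ^ (ℓ - s)))⁻¹ * b ℓ i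
        = (∏ s ∈ Finset.range (ℓ + 1), r s ^ (m ^ (ℓ - s)))⁻¹
          * ((A ℓ).mulVec (netFwd m arch A b x ℓ) i + b ℓ i) := by
      rw [hsplit, mul_inv]
      ring
    rw [harg, stmt12.repu_mul m (by positivity), inv_pow, stmt12.prod_pow_succ]

/-- Rescaling a RePU network: with `r_s = max{‖(A_s, b_s)‖_q, 1}`,
`Ã_ℓ = A_ℓ/r_ℓ`, `b̃_ℓ = b_ℓ/∏_{s≤ℓ} r_s^{m^{ℓ−s}}` and
`Ã_L = A_L·∏_{s<L} r_s^{m^{L−s}}`, the rescaled hidden layers satisfy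
`‖(Ã_ℓ, b̃_ℓ)‖_q ≤ 1` and the rescaled network computes the same function. -/
theorem stmt12 (m : ℕ) (hm : 1 ≤ m) (q : ℝ≥0∞) (hq : 1 ≤ q)
    (L : ℕ) (hL : 1 ≤ L) (arch : ℕ → ℕ) (harch : arch (L + 1) = 1)
    (A : ∀ ℓ : ℕ, Matrix (Fin (arch (ℓ + 1))) (Fin (arch ℓ)) ℝ)
    (b : ∀ ℓ : ℕ, Fin (arch (ℓ + 1)) → ℝ) :
    (∀ ℓ, ℓ < L →
      opNorm q (augM
        ((max (opNorm q (augM (A ℓ) (b ℓ))) 1)⁻¹ • A ℓ)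
        ((∏ s ∈ Finset.range (ℓ + 1),
            (max (opNorm q (augM (A s) (b s))) 1) ^ (m ^ (ℓ - s)))⁻¹ • b ℓ)) ≤ 1) ∧
    (∀ x : Fin (arch 0) → ℝ,
      ((∏ s ∈ Finset.range L, (max (opNorm q (augM (A s) (b s))) 1) ^ (m ^ (L - s))) • A L).mulVec
          (netFwd m arch
            (fun ℓ => (max (opNorm q (augM (A ℓ) (b ℓ))) 1)⁻¹ • A ℓ)
            (fun ℓ => (∏ s ∈ Finset.range (ℓ + 1),
                (max (opNorm q (augM (A s) (b s))) 1) ^ (m ^ (ℓ - s)))⁻¹ • b ℓ) x L)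
        = (A L).mulVec (netFwd m arch A b x L)) := by
  have hr : ∀ s : ℕ, (1:ℝ) ≤ max (opNorm q (augM (A s) (b s))) 1 := fun s => le_max_right _ _
  constructor
  · intro ℓ hℓ
    have hprodsplit : (∏ s ∈ Finset.range (ℓ + 1),
          (max (opNorm q (augM (A s) (b s))) 1) ^ (m ^ (ℓ - s)))
        = (∏ s ∈ Finset.range ℓ, (max (opNorm q (augM (A s) (b s))) 1) ^ (m ^ (ℓ - s)))
          * (max (opNorm q (augM (A ℓ) (b ℓ))) 1) := by
      rw [Finset.prod_range_succ, Nat.sub_self, pow_zero, pow_one]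
    rw [hprodsplit]
    refine stmt12.opNorm_aug_le hq (A ℓ) (b ℓ) ?_
    calc (1:ℝ) = ∏ _s ∈ Finset.range ℓ, 1 := by simp
    _ ≤ _ := Finset.prod_le_prod (fun i _ => zero_le_one) (fun i _ => one_le_pow₀ (hr i))
  · intro x
    rw [stmt12.netFwd_rescale m arch A b
      (fun s => max (opNorm q (augM (A s) (b s))) 1) hr x L]
    rw [Matrix.smul_mulVec, Matrix.mulVec_smul, smul_smul]
    have hpos : (0:ℝ) < ∏ s ∈ Finset.range L,
        (max (opNorm q (augM (A s) (b s))) 1) ^ (m ^ (L - s)) :=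
      Finset.prod_pos fun s _ => pow_pos (lt_of_lt_of_le one_pos (hr s)) _
    rw [mul_inv_cancel₀ hpos.ne', one_smul]
end

section
/- Fix d, m, L ∈ ℕ with m ≥ 2 and let g = g_L ∘ ⋯ ∘ g₀ be a RePU network of order m with architecture (d₀ = d, d₁, …, d_L, d_{L+1} = 1) whose hidden-layer parameters are normalized: ‖(A_ℓ, b_ℓ)‖_∞ ≤ 1 for all 0 ≤ ℓ ≤ L−1. Let 𝒳 = { x ∈ ℝ^d : ‖x‖_∞ ≤ 1 }. Then g is continuously differentiable on 𝒳 and: (a) ‖∇g(x)‖₁ ≤ m^L · ‖A_L‖_∞ for every x ∈ 𝒳; (b) ‖∇g(x) − ∇g(x̃)‖₁ ≤ L · m^{2L} · ‖A_L‖_∞ · ‖x − x̃‖_∞ for all x, x̃ ∈ 𝒳 (in particular, at every point of 𝒳 where g is twice differentiable, the Hessian satisfies ‖∇²g(x)‖_∞ ≤ L · m^{2L} · ‖A_L‖_∞). -/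
/-- The `ℓ∞` operator norm of a matrix: `‖A‖_∞ = max_i Σ_j |a_{ij}|`. -/
noncomputable def matInfNorm {p q : ℕ} (A : Matrix (Fin p) (Fin q) ℝ) : ℝ :=
  ⨆ i, ∑ j, |A i j|

/-- `‖(A, b)‖_∞`, the `ℓ∞` operator norm of `A` augmented with the column `b`. -/
noncomputable def augInfNorm {p q : ℕ} (A : Matrix (Fin p) (Fin q) ℝ) (b : Fin p → ℝ) : ℝ :=
  ⨆ i, ((∑ j, |A i j|) + |b i|)

lemma abs_pow_sub_pow_le' (n : ℕ) (a c : ℝ) (ha : |a| ≤ 1) (hc : |c| ≤ 1) :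
    |a ^ n - c ^ n| ≤ n * |a - c| := by
  induction n with
  | zero => simp
  | succ n ih =>
    have h : a ^ (n+1) - c ^ (n+1) = a ^ n * (a - c) + c * (a ^ n - c ^ n) := by ring
    rw [h]
    calc |a^n * (a-c) + c * (a^n - c^n)| ≤ |a^n * (a-c)| + |c * (a^n - c^n)| := abs_add_le _ _
    _ = |a|^n * |a-c| + |c| * |a^n - c^n| := by rw [abs_mul, abs_mul, abs_pow]
    _ ≤ 1 * |a-c| + 1 * (n * |a-c|) := by
        gcongr <;> first | exact pow_le_one₀ (abs_nonneg _) ha | exact abs_nonneg _ | exact hc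
    _ = (↑(n+1)) * |a-c| := by push_cast; ring

lemma repu_hasDerivAt (m : ℕ) (hm : 2 ≤ m) (t : ℝ) :
    HasDerivAt (repu m) (m * (max t 0) ^ (m - 1)) t := by
  rcases lt_trichotomy t 0 with h | h | h
  · have hev : (fun _ : ℝ => (0:ℝ)) =ᶠ[nhds t] repu m := by
      filter_upwards [Iio_mem_nhds h] with s hs
      have hs : s < 0 := hs
      simp [repu, max_eq_right hs.le, zero_pow (by omega : m ≠ 0)]
    have h0 : HasDerivAt (fun _ : ℝ => (0:ℝ)) 0 t := hasDerivAt_const t 0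
    have h1 := h0.congr_of_eventuallyEq hev.symm
    rw [max_eq_right h.le, zero_pow (by omega : m - 1 ≠ 0), mul_zero]
    exact h1
  · subst h
    have h0 : HasDerivAt (repu m) 0 0 := by
      rw [hasDerivAt_iff_tendsto_slope]
      apply squeeze_zero_norm' (a := fun s : ℝ => |s| ^ (m - 1))
      · filter_upwards [self_mem_nhdsWithin] with s hs
        have hs : s ≠ 0 := hs
        rcases le_or_gt s 0 with h2 | h2
        · have : slope (repu m) 0 s = 0 := by
            simp [slope_def_field, repu, max_eq_right h2, zero_pow (by omega : m ≠ 0)]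
          rw [this, norm_zero]
          positivity
        · have h3 : slope (repu m) 0 s = s ^ (m - 1) := by
            rw [slope_def_field, repu, repu]
            rw [max_eq_left h2.le, max_eq_right le_rfl, zero_pow (by omega : m ≠ 0)]
            rw [sub_zero, sub_zero, div_eq_iff hs, ← pow_succ]
            congr 1
            omega
          rw [h3, Real.norm_eq_abs, ← abs_pow]
      · have := (continuous_abs.pow (m-1)).tendsto (0:ℝ)
        have h4 := this.mono_left (nhdsWithin_le_nhds (s := {(0:ℝ)}ᶜ))
        convert h4 using 2 <;>
          simp [Pi.pow_apply, zero_pow (by omega : m - 1 ≠ 0)]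
    convert h0 using 1
    simp [zero_pow (by omega : m - 1 ≠ 0)]
  · have hev : (fun s : ℝ => s ^ m) =ᶠ[nhds t] repu m := by
      filter_upwards [Ioi_mem_nhds h] with s hs
      simp [repu, max_eq_left (le_of_lt (Set.mem_Ioi.mp hs))]
    have h1 := (hasDerivAt_pow m t).congr_of_eventuallyEq hev.symm
    rw [max_eq_left h.le]
    exact h1

lemma repu_deriv (m : ℕ) (hm : 2 ≤ m) :
    deriv (repu m) = fun t : ℝ => (m : ℝ) * (max t 0) ^ (m - 1) :=
  funext fun t => (repu_hasDerivAt m hm t).deriv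

lemma repu_contDiff (m : ℕ) (hm : 2 ≤ m) : ContDiff ℝ 1 (repu m) := by
  rw [contDiff_one_iff_deriv]
  refine ⟨fun t => (repu_hasDerivAt m hm t).differentiableAt, ?_⟩
  rw [repu_deriv m hm]
  exact continuous_const.mul ((continuous_id.max continuous_const).pow _)

section Net

variable (m : ℕ) (arch : ℕ → ℕ)
  (A : ∀ ℓ : ℕ, Matrix (Fin (arch (ℓ + 1))) (Fin (arch ℓ)) ℝ)
  (b : ∀ ℓ : ℕ, Fin (arch (ℓ + 1)) → ℝ)

/-- the (recursively defined) gradient of hidden unit `i` of layer `ℓ` w.r.t. input `k`. -/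
noncomputable def grad (x : Fin (arch 0) → ℝ) : (ℓ : ℕ) → Fin (arch ℓ) → Fin (arch 0) → ℝ
  | 0 => fun i k => if k = i then 1 else 0
  | ℓ + 1 => fun i k =>
      (m * (max ((A ℓ).mulVec (netFwd m arch A b x ℓ) i + b ℓ i) 0) ^ (m - 1)) *
      ∑ j, A ℓ i j * grad x ℓ j k

noncomputable def gradCLM (x : Fin (arch 0) → ℝ) (ℓ : ℕ) (i : Fin (arch ℓ)) :
    (Fin (arch 0) → ℝ) →L[ℝ] ℝ :=
  ∑ k, grad m arch A b x ℓ i k •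
    (ContinuousLinearMap.proj k : (Fin (arch 0) → ℝ) →L[ℝ] ℝ)

lemma gradCLM_apply (x : Fin (arch 0) → ℝ) (ℓ : ℕ) (i : Fin (arch ℓ))
    (w : Fin (arch 0) → ℝ) :
    gradCLM m arch A b x ℓ i w = ∑ k, grad m arch A b x ℓ i k * w k := by
  simp [gradCLM, ContinuousLinearMap.sum_apply, smul_eq_mul]

lemma netFwd_hasFDerivAt (hm : 2 ≤ m) (x : Fin (arch 0) → ℝ) :
    ∀ (ℓ : ℕ) (i : Fin (arch ℓ)),
      HasFDerivAt (fun y => netFwd m arch A b y ℓ i) (gradCLM m arch A b x ℓ i) x := by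
  intro ℓ
  induction ℓ with
  | zero =>
    intro i
    have h : HasFDerivAt (fun y : Fin (arch 0) → ℝ => y i)
        (ContinuousLinearMap.proj i : (Fin (arch 0) → ℝ) →L[ℝ] ℝ) x :=
      hasFDerivAt_apply (𝕜 := ℝ) i x
    have he : gradCLM m arch A b x 0 i = ContinuousLinearMap.proj i := by
      apply ContinuousLinearMap.ext
      intro w
      simp [gradCLM_apply, grad]
    rw [he]
    exact h
  | succ ℓ ih =>
    intro i
    have hz : HasFDerivAt (fun y => (A ℓ).mulVec (netFwd m arch A b y ℓ) i + b ℓ i)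
        (∑ j, A ℓ i j • gradCLM m arch A b x ℓ j) x := by
      have h1 : HasFDerivAt (fun y => ∑ j, A ℓ i j * netFwd m arch A b y ℓ j)
          (∑ j, A ℓ i j • gradCLM m arch A b x ℓ j) x :=
        HasFDerivAt.fun_sum (fun j _ => (ih j).const_mul (A ℓ i j))
      have h2 := h1.add_const (b ℓ i)
      have h3 : (fun y => (A ℓ).mulVec (netFwd m arch A b y ℓ) i + b ℓ i)
          = fun y => (∑ j, A ℓ i j * netFwd m arch A b y ℓ j) + b ℓ i := by
        funext y
        simp [Matrix.mulVec, dotProduct]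
      rw [h3]
      exact h2
    have hc := (repu_hasDerivAt m hm
        ((A ℓ).mulVec (netFwd m arch A b x ℓ) i + b ℓ i)).comp_hasFDerivAt x hz
    have he : (m * (max ((A ℓ).mulVec (netFwd m arch A b x ℓ) i + b ℓ i) 0) ^ (m - 1)) •
        (∑ j, A ℓ i j • gradCLM m arch A b x ℓ j) = gradCLM m arch A b x (ℓ+1) i := by
      apply ContinuousLinearMap.ext
      intro w
      simp only [ContinuousLinearMap.smul_apply, ContinuousLinearMap.sum_apply,
        gradCLM_apply, smul_eq_mul, grad]
      simp only [Finset.mul_sum, Finset.sum_mul]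
      rw [Finset.sum_comm]
      exact Finset.sum_congr rfl fun k _ => Finset.sum_congr rfl fun j _ => by ring
    rw [← he]
    exact hc

lemma netFwd_contDiff (hm : 2 ≤ m) :
    ∀ (ℓ : ℕ) (i : Fin (arch ℓ)), ContDiff ℝ 1 (fun y => netFwd m arch A b y ℓ i) := by
  intro ℓ
  induction ℓ with
  | zero =>
    intro i
    exact (ContinuousLinearMap.proj i : (Fin (arch 0) → ℝ) →L[ℝ] ℝ).contDiff
  | succ ℓ ih =>
    intro i
    have h3 : (fun y => netFwd m arch A b y (ℓ+1) i)
        = fun y => repu m ((∑ j, A ℓ i j * netFwd m arch A b y ℓ j) + b ℓ i) := by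
      funext y
      simp [netFwd, Matrix.mulVec, dotProduct]
    rw [h3]
    exact (repu_contDiff m hm).comp
      ((ContDiff.sum fun j _ => contDiff_const.mul (ih j)).add contDiff_const)

lemma row_bound {ℓ : ℕ} (hℓ : augInfNorm (A ℓ) (b ℓ) ≤ 1) (i : Fin (arch (ℓ+1))) :
    (∑ j, |A ℓ i j|) + |b ℓ i| ≤ 1 := by
  have h := le_ciSup (f := fun i : Fin (arch (ℓ+1)) => (∑ j, |A ℓ i j|) + |b ℓ i|)
    ((Set.finite_range _).bddAbove) i
  rw [augInfNorm] at hℓ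
  exact le_trans h hℓ

lemma zval_abs_le {ℓ : ℕ} (x : Fin (arch 0) → ℝ)
    (hrow : augInfNorm (A ℓ) (b ℓ) ≤ 1) (i : Fin (arch (ℓ+1)))
    (hN : ∀ j, |netFwd m arch A b x ℓ j| ≤ 1) :
    |(A ℓ).mulVec (netFwd m arch A b x ℓ) i + b ℓ i| ≤ 1 := by
  have h1 : |(A ℓ).mulVec (netFwd m arch A b x ℓ) i| ≤ ∑ j, |A ℓ i j| := by
    have : (A ℓ).mulVec (netFwd m arch A b x ℓ) i
        = ∑ j, A ℓ i j * netFwd m arch A b x ℓ j := by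
      simp [Matrix.mulVec, dotProduct]
    rw [this]
    refine le_trans (Finset.abs_sum_le_sum_abs _ _) ?_
    refine Finset.sum_le_sum fun j _ => ?_
    rw [abs_mul]
    calc |A ℓ i j| * |netFwd m arch A b x ℓ j| ≤ |A ℓ i j| * 1 :=
          mul_le_mul_of_nonneg_left (hN j) (abs_nonneg _)
      _ = |A ℓ i j| := mul_one _
  calc |(A ℓ).mulVec (netFwd m arch A b x ℓ) i + b ℓ i|
      ≤ |(A ℓ).mulVec (netFwd m arch A b x ℓ) i| + |b ℓ i| := abs_add_le _ _
    _ ≤ (∑ j, |A ℓ i j|) + |b ℓ i| := by gcongr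
    _ ≤ 1 := row_bound arch A b hrow i

lemma netFwd_le_one (hm : 2 ≤ m) (L : ℕ)
    (hnorm : ∀ ℓ, ℓ < L → augInfNorm (A ℓ) (b ℓ) ≤ 1)
    (x : Fin (arch 0) → ℝ) (hx : ‖x‖ ≤ 1) :
    ∀ ℓ, ℓ ≤ L → ∀ i, |netFwd m arch A b x ℓ i| ≤ 1 := by
  intro ℓ
  induction ℓ with
  | zero =>
    intro _ i
    show |x i| ≤ 1
    calc |x i| = ‖x i‖ := (Real.norm_eq_abs _).symm
      _ ≤ ‖x‖ := norm_le_pi_norm x i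
      _ ≤ 1 := hx
  | succ ℓ ih =>
    intro hℓ i
    have hz := zval_abs_le m arch A b x (hnorm ℓ (by omega)) i (ih (by omega))
    show |repu m ((A ℓ).mulVec (netFwd m arch A b x ℓ) i + b ℓ i)| ≤ 1
    set z := (A ℓ).mulVec (netFwd m arch A b x ℓ) i + b ℓ i with hzdef
    have h0 : (0:ℝ) ≤ max z 0 := le_max_right _ _
    have h1 : max z 0 ≤ 1 := max_le (le_trans (le_abs_self z) hz) one_pos.le
    rw [repu, abs_pow, abs_of_nonneg h0]
    exact pow_le_one₀ h0 h1

lemma maxz_le_one {ℓ : ℕ} (x : Fin (arch 0) → ℝ) (i : Fin (arch (ℓ+1)))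
    (hz : |(A ℓ).mulVec (netFwd m arch A b x ℓ) i + b ℓ i| ≤ 1) :
    (0:ℝ) ≤ max ((A ℓ).mulVec (netFwd m arch A b x ℓ) i + b ℓ i) 0 ∧
    max ((A ℓ).mulVec (netFwd m arch A b x ℓ) i + b ℓ i) 0 ≤ 1 :=
  ⟨le_max_right _ _, max_le (le_trans (le_abs_self _) hz) one_pos.le⟩

lemma grad_sum_le (hm : 2 ≤ m) (L : ℕ)
    (hnorm : ∀ ℓ, ℓ < L → augInfNorm (A ℓ) (b ℓ) ≤ 1)
    (x : Fin (arch 0) → ℝ) (hx : ‖x‖ ≤ 1) :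
    ∀ ℓ, ℓ ≤ L → ∀ i, (∑ k, |grad m arch A b x ℓ i k|) ≤ (m:ℝ) ^ ℓ := by
  intro ℓ
  induction ℓ with
  | zero =>
    intro _ i
    simp [grad, apply_ite abs, Finset.sum_ite_eq' Finset.univ i]
  | succ ℓ ih =>
    intro hℓ i
    have hz := zval_abs_le m arch A b x (hnorm ℓ (by omega)) i
      (netFwd_le_one m arch A b hm L hnorm x hx ℓ (by omega))
    obtain ⟨h0, h1⟩ := maxz_le_one m arch A b x i hz
    set z := (A ℓ).mulVec (netFwd m arch A b x ℓ) i + b ℓ i with hzdef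
    have hsig : |(m:ℝ) * (max z 0) ^ (m-1)| ≤ m := by
      rw [abs_of_nonneg (by positivity)]
      calc (m:ℝ) * (max z 0) ^ (m-1) ≤ (m:ℝ) * 1 := by
            gcongr
            exact pow_le_one₀ h0 h1
        _ = m := mul_one _
    have hrow : (∑ j, |A ℓ i j|) ≤ 1 := by
      have := row_bound arch A b (hnorm ℓ (by omega)) i
      have hb : (0:ℝ) ≤ |b ℓ i| := abs_nonneg _
      linarith
    calc (∑ k, |grad m arch A b x (ℓ+1) i k|)
        = ∑ k, |(m:ℝ) * (max z 0) ^ (m-1)| * |∑ j, A ℓ i j * grad m arch A b x ℓ j k| := by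
          refine Finset.sum_congr rfl fun k _ => ?_
          rw [show grad m arch A b x (ℓ+1) i k
              = ((m:ℝ) * (max z 0) ^ (m-1)) * ∑ j, A ℓ i j * grad m arch A b x ℓ j k from rfl,
            abs_mul]
      _ ≤ ∑ k, (m:ℝ) * ∑ j, |A ℓ i j| * |grad m arch A b x ℓ j k| := by
          refine Finset.sum_le_sum fun k _ => ?_
          refine mul_le_mul hsig ?_ (abs_nonneg _) (Nat.cast_nonneg m)
          refine le_trans (Finset.abs_sum_le_sum_abs _ _) ?_
          exact le_of_eq (Finset.sum_congr rfl fun j _ => abs_mul _ _)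
      _ = (m:ℝ) * ∑ j, |A ℓ i j| * ∑ k, |grad m arch A b x ℓ j k| := by
          rw [← Finset.mul_sum, Finset.sum_comm]
          congr 1
          exact Finset.sum_congr rfl fun j _ => (Finset.mul_sum _ _ _).symm
      _ ≤ (m:ℝ) * ∑ j, |A ℓ i j| * (m:ℝ) ^ ℓ := by
          refine mul_le_mul_of_nonneg_left ?_ (Nat.cast_nonneg m)
          exact Finset.sum_le_sum fun j _ =>
            mul_le_mul_of_nonneg_left (ih (by omega) j) (abs_nonneg _)
      _ = (m:ℝ) * ((∑ j, |A ℓ i j|) * (m:ℝ) ^ ℓ) := by rw [Finset.sum_mul]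
      _ ≤ (m:ℝ) * (1 * (m:ℝ) ^ ℓ) := by
          refine mul_le_mul_of_nonneg_left ?_ (Nat.cast_nonneg m)
          exact mul_le_mul_of_nonneg_right hrow (by positivity)
      _ = (m:ℝ) ^ (ℓ+1) := by ring

lemma sum_abs_dot_le {ι κ : Type*} [Fintype ι] [Fintype κ] (a : ι → ℝ) (g : ι → κ → ℝ)
    (C : ℝ) (hC : ∀ j, (∑ k, |g j k|) ≤ C) :
    (∑ k, |∑ j, a j * g j k|) ≤ (∑ j, |a j|) * C := by
  calc ∑ k, |∑ j, a j * g j k| ≤ ∑ k, ∑ j, |a j| * |g j k| := by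
        refine Finset.sum_le_sum fun k _ => le_trans (Finset.abs_sum_le_sum_abs _ _) ?_
        exact le_of_eq (Finset.sum_congr rfl fun j _ => abs_mul _ _)
    _ = ∑ j, |a j| * ∑ k, |g j k| := by
        rw [Finset.sum_comm]
        exact Finset.sum_congr rfl fun j _ => (Finset.mul_sum _ _ _).symm
    _ ≤ ∑ j, |a j| * C :=
        Finset.sum_le_sum fun j _ => mul_le_mul_of_nonneg_left (hC j) (abs_nonneg _)
    _ = (∑ j, |a j|) * C := (Finset.sum_mul _ _ _).symm

lemma netFwd_lip (hm : 2 ≤ m) (L : ℕ)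
    (hnorm : ∀ ℓ, ℓ < L → augInfNorm (A ℓ) (b ℓ) ≤ 1)
    (x y : Fin (arch 0) → ℝ) (hx : ‖x‖ ≤ 1) (hy : ‖y‖ ≤ 1) :
    ∀ ℓ, ℓ ≤ L → ∀ i, |netFwd m arch A b x ℓ i - netFwd m arch A b y ℓ i|
      ≤ (m:ℝ) ^ ℓ * ‖x - y‖ := by
  intro ℓ
  induction ℓ with
  | zero =>
    intro _ i
    show |x i - y i| ≤ (m:ℝ) ^ 0 * ‖x - y‖
    rw [pow_zero, one_mul]
    calc |x i - y i| = ‖(x - y) i‖ := by rw [Real.norm_eq_abs, Pi.sub_apply]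
      _ ≤ ‖x - y‖ := norm_le_pi_norm (x - y) i
  | succ ℓ ih =>
    intro hℓ i
    have hzx := zval_abs_le m arch A b x (hnorm ℓ (by omega)) i
      (netFwd_le_one m arch A b hm L hnorm x hx ℓ (by omega))
    have hzy := zval_abs_le m arch A b y (hnorm ℓ (by omega)) i
      (netFwd_le_one m arch A b hm L hnorm y hy ℓ (by omega))
    set zx := (A ℓ).mulVec (netFwd m arch A b x ℓ) i + b ℓ i with hzxd
    set zy := (A ℓ).mulVec (netFwd m arch A b y ℓ) i + b ℓ i with hzyd
    have hrow : (∑ j, |A ℓ i j|) ≤ 1 := by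
      have := row_bound arch A b (hnorm ℓ (by omega)) i
      have hb : (0:ℝ) ≤ |b ℓ i| := abs_nonneg _
      linarith
    have hzd : |zx - zy| ≤ (m:ℝ) ^ ℓ * ‖x - y‖ := by
      have he : zx - zy = ∑ j, A ℓ i j *
          (netFwd m arch A b x ℓ j - netFwd m arch A b y ℓ j) := by
        rw [hzxd, hzyd]
        simp [Matrix.mulVec, dotProduct, ← Finset.sum_sub_distrib]
        exact Finset.sum_congr rfl fun j _ => by ring
      rw [he]
      calc |∑ j, A ℓ i j * (netFwd m arch A b x ℓ j - netFwd m arch A b y ℓ j)|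
          ≤ ∑ j, |A ℓ i j| * |netFwd m arch A b x ℓ j - netFwd m arch A b y ℓ j| := by
            refine le_trans (Finset.abs_sum_le_sum_abs _ _) ?_
            exact le_of_eq (Finset.sum_congr rfl fun j _ => abs_mul _ _)
        _ ≤ ∑ j, |A ℓ i j| * ((m:ℝ) ^ ℓ * ‖x - y‖) :=
            Finset.sum_le_sum fun j _ =>
              mul_le_mul_of_nonneg_left (ih (by omega) j) (abs_nonneg _)
        _ = (∑ j, |A ℓ i j|) * ((m:ℝ) ^ ℓ * ‖x - y‖) := (Finset.sum_mul _ _ _).symm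
        _ ≤ 1 * ((m:ℝ) ^ ℓ * ‖x - y‖) :=
            mul_le_mul_of_nonneg_right hrow (by positivity)
        _ = (m:ℝ) ^ ℓ * ‖x - y‖ := one_mul _
    show |repu m zx - repu m zy| ≤ (m:ℝ) ^ (ℓ+1) * ‖x - y‖
    obtain ⟨h0x, h1x⟩ := maxz_le_one m arch A b x i hzx
    obtain ⟨h0y, h1y⟩ := maxz_le_one m arch A b y i hzy
    have hax : |max zx 0| ≤ 1 := by rwa [abs_of_nonneg h0x]
    have hay : |max zy 0| ≤ 1 := by rwa [abs_of_nonneg h0y]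
    calc |repu m zx - repu m zy| = |(max zx 0) ^ m - (max zy 0) ^ m| := rfl
      _ ≤ (m:ℝ) * |max zx 0 - max zy 0| := abs_pow_sub_pow_le' m _ _ hax hay
      _ ≤ (m:ℝ) * |zx - zy| :=
          mul_le_mul_of_nonneg_left (abs_max_sub_max_le_abs _ _ _) (Nat.cast_nonneg m)
      _ ≤ (m:ℝ) * ((m:ℝ) ^ ℓ * ‖x - y‖) :=
          mul_le_mul_of_nonneg_left hzd (Nat.cast_nonneg m)
      _ = (m:ℝ) ^ (ℓ+1) * ‖x - y‖ := by ring

lemma zdiff_le (hm : 2 ≤ m) (L : ℕ)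
    (hnorm : ∀ ℓ, ℓ < L → augInfNorm (A ℓ) (b ℓ) ≤ 1)
    (x y : Fin (arch 0) → ℝ) (hx : ‖x‖ ≤ 1) (hy : ‖y‖ ≤ 1)
    (ℓ : ℕ) (hℓ : ℓ < L) (i : Fin (arch (ℓ+1))) :
    |((A ℓ).mulVec (netFwd m arch A b x ℓ) i + b ℓ i)
      - ((A ℓ).mulVec (netFwd m arch A b y ℓ) i + b ℓ i)| ≤ (m:ℝ) ^ ℓ * ‖x - y‖ := by
  have hrow : (∑ j, |A ℓ i j|) ≤ 1 := by
    have := row_bound arch A b (hnorm ℓ (by omega)) i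
    have hb : (0:ℝ) ≤ |b ℓ i| := abs_nonneg _
    linarith
  have he : ((A ℓ).mulVec (netFwd m arch A b x ℓ) i + b ℓ i)
      - ((A ℓ).mulVec (netFwd m arch A b y ℓ) i + b ℓ i)
      = ∑ j, A ℓ i j * (netFwd m arch A b x ℓ j - netFwd m arch A b y ℓ j) := by
    simp [Matrix.mulVec, dotProduct, ← Finset.sum_sub_distrib]
    exact Finset.sum_congr rfl fun j _ => by ring
  rw [he]
  calc |∑ j, A ℓ i j * (netFwd m arch A b x ℓ j - netFwd m arch A b y ℓ j)|
      ≤ ∑ j, |A ℓ i j| * |netFwd m arch A b x ℓ j - netFwd m arch A b y ℓ j| := by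
        refine le_trans (Finset.abs_sum_le_sum_abs _ _) ?_
        exact le_of_eq (Finset.sum_congr rfl fun j _ => abs_mul _ _)
    _ ≤ ∑ j, |A ℓ i j| * ((m:ℝ) ^ ℓ * ‖x - y‖) :=
        Finset.sum_le_sum fun j _ => mul_le_mul_of_nonneg_left
          (netFwd_lip m arch A b hm L hnorm x y hx hy ℓ (by omega) j) (abs_nonneg _)
    _ = (∑ j, |A ℓ i j|) * ((m:ℝ) ^ ℓ * ‖x - y‖) := (Finset.sum_mul _ _ _).symm
    _ ≤ 1 * ((m:ℝ) ^ ℓ * ‖x - y‖) := mul_le_mul_of_nonneg_right hrow (by positivity)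
    _ = (m:ℝ) ^ ℓ * ‖x - y‖ := one_mul _

lemma grad_lip (hm : 2 ≤ m) (L : ℕ)
    (hnorm : ∀ ℓ, ℓ < L → augInfNorm (A ℓ) (b ℓ) ≤ 1)
    (x y : Fin (arch 0) → ℝ) (hx : ‖x‖ ≤ 1) (hy : ‖y‖ ≤ 1) :
    ∀ ℓ, ℓ ≤ L → ∀ i, (∑ k, |grad m arch A b x ℓ i k - grad m arch A b y ℓ i k|)
      ≤ (ℓ:ℝ) * (m:ℝ) ^ (2*ℓ) * ‖x - y‖ := by
  intro ℓ
  induction ℓ with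
  | zero =>
    intro _ i
    simp [grad]
  | succ ℓ ih =>
    intro hℓ i
    have hzx := zval_abs_le m arch A b x (hnorm ℓ (by omega)) i
      (netFwd_le_one m arch A b hm L hnorm x hx ℓ (by omega))
    have hzy := zval_abs_le m arch A b y (hnorm ℓ (by omega)) i
      (netFwd_le_one m arch A b hm L hnorm y hy ℓ (by omega))
    set zx := (A ℓ).mulVec (netFwd m arch A b x ℓ) i + b ℓ i with hzxd
    set zy := (A ℓ).mulVec (netFwd m arch A b y ℓ) i + b ℓ i with hzyd
    obtain ⟨h0x, h1x⟩ := maxz_le_one m arch A b x i hzx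
    obtain ⟨h0y, h1y⟩ := maxz_le_one m arch A b y i hzy
    have hax : |max zx 0| ≤ 1 := by rwa [abs_of_nonneg h0x]
    have hay : |max zy 0| ≤ 1 := by rwa [abs_of_nonneg h0y]
    have hrow : (∑ j, |A ℓ i j|) ≤ 1 := by
      have := row_bound arch A b (hnorm ℓ (by omega)) i
      have hb : (0:ℝ) ≤ |b ℓ i| := abs_nonneg _
      linarith
    have hzd : |zx - zy| ≤ (m:ℝ) ^ ℓ * ‖x - y‖ :=
      zdiff_le m arch A b hm L hnorm x y hx hy ℓ (by omega) i
    set sx := (m:ℝ) * (max zx 0) ^ (m-1) with hsxd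
    set sy := (m:ℝ) * (max zy 0) ^ (m-1) with hsyd
    set Sx : Fin (arch 0) → ℝ := fun k => ∑ j, A ℓ i j * grad m arch A b x ℓ j k with hSxd
    set Sy : Fin (arch 0) → ℝ := fun k => ∑ j, A ℓ i j * grad m arch A b y ℓ j k with hSyd
    have hgx : ∀ k, grad m arch A b x (ℓ+1) i k = sx * Sx k := fun k => rfl
    have hgy : ∀ k, grad m arch A b y (ℓ+1) i k = sy * Sy k := fun k => rfl
    have hsx : |sx| ≤ (m:ℝ) := by
      rw [hsxd, abs_mul, abs_of_nonneg (Nat.cast_nonneg m), abs_of_nonneg (by positivity)]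
      calc (m:ℝ) * (max zx 0) ^ (m-1) ≤ (m:ℝ) * 1 :=
            mul_le_mul_of_nonneg_left (pow_le_one₀ h0x h1x) (Nat.cast_nonneg m)
        _ = m := mul_one _
    have hsd : |sx - sy| ≤ (m:ℝ) * ((m:ℝ) * ((m:ℝ) ^ ℓ * ‖x - y‖)) := by
      calc |sx - sy| = (m:ℝ) * |(max zx 0) ^ (m-1) - (max zy 0) ^ (m-1)| := by
            rw [hsxd, hsyd, ← mul_sub, abs_mul, abs_of_nonneg (Nat.cast_nonneg m)]
        _ ≤ (m:ℝ) * (((m-1:ℕ):ℝ) * |max zx 0 - max zy 0|) :=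
            mul_le_mul_of_nonneg_left (abs_pow_sub_pow_le' (m-1) _ _ hax hay)
              (Nat.cast_nonneg m)
        _ ≤ (m:ℝ) * ((m:ℝ) * |zx - zy|) := by
            refine mul_le_mul_of_nonneg_left ?_ (Nat.cast_nonneg m)
            refine mul_le_mul ?_ (abs_max_sub_max_le_abs _ _ _) (abs_nonneg _)
              (Nat.cast_nonneg m)
            exact_mod_cast Nat.sub_le m 1
        _ ≤ (m:ℝ) * ((m:ℝ) * ((m:ℝ) ^ ℓ * ‖x - y‖)) :=
            mul_le_mul_of_nonneg_left
              (mul_le_mul_of_nonneg_left hzd (Nat.cast_nonneg m)) (Nat.cast_nonneg m)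
    have hT1 : (∑ k, |Sx k - Sy k|) ≤ (ℓ:ℝ) * (m:ℝ) ^ (2*ℓ) * ‖x - y‖ := by
      have he : ∀ k, Sx k - Sy k
          = ∑ j, A ℓ i j * (grad m arch A b x ℓ j k - grad m arch A b y ℓ j k) := by
        intro k
        rw [hSxd, hSyd]
        simp only [← Finset.sum_sub_distrib]
        exact Finset.sum_congr rfl fun j _ => by ring
      calc (∑ k, |Sx k - Sy k|)
          = ∑ k, |∑ j, A ℓ i j * (grad m arch A b x ℓ j k - grad m arch A b y ℓ j k)| :=
            Finset.sum_congr rfl fun k _ => by rw [he k]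
        _ ≤ (∑ j, |A ℓ i j|) * ((ℓ:ℝ) * (m:ℝ) ^ (2*ℓ) * ‖x - y‖) :=
            sum_abs_dot_le _ _ _ (fun j => ih (by omega) j)
        _ ≤ 1 * ((ℓ:ℝ) * (m:ℝ) ^ (2*ℓ) * ‖x - y‖) :=
            mul_le_mul_of_nonneg_right hrow (by positivity)
        _ = (ℓ:ℝ) * (m:ℝ) ^ (2*ℓ) * ‖x - y‖ := one_mul _
    have hT2 : (∑ k, |Sy k|) ≤ (m:ℝ) ^ ℓ := by
      calc (∑ k, |Sy k|)
          ≤ (∑ j, |A ℓ i j|) * ((m:ℝ) ^ ℓ) :=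
            sum_abs_dot_le _ _ _
              (fun j => grad_sum_le m arch A b hm L hnorm y hy ℓ (by omega) j)
        _ ≤ 1 * ((m:ℝ) ^ ℓ) := mul_le_mul_of_nonneg_right hrow (by positivity)
        _ = (m:ℝ) ^ ℓ := one_mul _
    have h1m : (1:ℝ) ≤ (m:ℝ) := by exact_mod_cast (by omega : 1 ≤ m)
    have hD : (0:ℝ) ≤ ‖x - y‖ := norm_nonneg _
    calc (∑ k, |grad m arch A b x (ℓ+1) i k - grad m arch A b y (ℓ+1) i k|)
        = ∑ k, |sx * (Sx k - Sy k) + (sx - sy) * Sy k| := by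
          refine Finset.sum_congr rfl fun k _ => ?_
          rw [hgx k, hgy k]
          congr 1
          ring
      _ ≤ ∑ k, (|sx| * |Sx k - Sy k| + |sx - sy| * |Sy k|) :=
          Finset.sum_le_sum fun k _ => le_trans (abs_add_le _ _)
            (le_of_eq (by rw [abs_mul sx, abs_mul (sx - sy)]))
      _ = |sx| * (∑ k, |Sx k - Sy k|) + |sx - sy| * (∑ k, |Sy k|) := by
          rw [Finset.sum_add_distrib, Finset.mul_sum, Finset.mul_sum]
      _ ≤ (m:ℝ) * ((ℓ:ℝ) * (m:ℝ) ^ (2*ℓ) * ‖x - y‖)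
          + ((m:ℝ) * ((m:ℝ) * ((m:ℝ) ^ ℓ * ‖x - y‖))) * ((m:ℝ) ^ ℓ) := by
          refine add_le_add (mul_le_mul hsx hT1 ?_ (Nat.cast_nonneg m))
            (mul_le_mul hsd hT2 ?_ (by positivity))
          · exact Finset.sum_nonneg fun k _ => abs_nonneg _
          · exact Finset.sum_nonneg fun k _ => abs_nonneg _
      _ = (ℓ:ℝ) * (m:ℝ) ^ (2*ℓ+1) * ‖x - y‖ + (m:ℝ) ^ (2*ℓ+2) * ‖x - y‖ := by ring
      _ ≤ (ℓ:ℝ) * (m:ℝ) ^ (2*ℓ+2) * ‖x - y‖ + (m:ℝ) ^ (2*ℓ+2) * ‖x - y‖ := by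
          refine add_le_add (mul_le_mul_of_nonneg_right
            (mul_le_mul_of_nonneg_left (pow_le_pow_right₀ h1m (by omega)) (Nat.cast_nonneg ℓ))
            hD) le_rfl
      _ = ((ℓ+1:ℕ):ℝ) * (m:ℝ) ^ (2*(ℓ+1)) * ‖x - y‖ := by
          push_cast
          rw [show 2*(ℓ+1) = 2*ℓ+2 from by omega]
          ring

lemma netOut_hasFDerivAt (hm : 2 ≤ m) (L : ℕ) (x : Fin (arch 0) → ℝ) :
    HasFDerivAt (netOut m arch A b L)
      (∑ i, ∑ j, A L i j • gradCLM m arch A b x L j) x := by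
  have h : HasFDerivAt (fun y => ∑ i, ∑ j, A L i j * netFwd m arch A b y L j)
      (∑ i, ∑ j, A L i j • gradCLM m arch A b x L j) x :=
    HasFDerivAt.fun_sum fun i _ => HasFDerivAt.fun_sum fun j _ =>
      (netFwd_hasFDerivAt m arch A b hm x L j).const_mul _
  have he : netOut m arch A b L = fun y => ∑ i, ∑ j, A L i j * netFwd m arch A b y L j := by
    funext y
    rw [netOut]
    exact Finset.sum_congr rfl fun i _ => by simp [Matrix.mulVec, dotProduct]
  rw [he]
  exact h

lemma netOut_fderiv_single (hm : 2 ≤ m) (L : ℕ) (x : Fin (arch 0) → ℝ) (k : Fin (arch 0)) :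
    fderiv ℝ (netOut m arch A b L) x (Pi.single k 1)
      = ∑ i, ∑ j, A L i j * grad m arch A b x L j k := by
  rw [(netOut_hasFDerivAt m arch A b hm L x).fderiv]
  rw [ContinuousLinearMap.sum_apply]
  refine Finset.sum_congr rfl fun i _ => ?_
  rw [ContinuousLinearMap.sum_apply]
  refine Finset.sum_congr rfl fun j _ => ?_
  rw [ContinuousLinearMap.smul_apply, gradCLM_apply, smul_eq_mul]
  congr 1
  rw [Finset.sum_eq_single_of_mem k (Finset.mem_univ k)]
  · simp
  · intro c _ hc
    simp [Pi.single_apply, hc]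

lemma netOut_contDiff (hm : 2 ≤ m) (L : ℕ) : ContDiff ℝ 1 (netOut m arch A b L) := by
  have he : netOut m arch A b L = fun y => ∑ i, ∑ j, A L i j * netFwd m arch A b y L j := by
    funext y
    rw [netOut]
    exact Finset.sum_congr rfl fun i _ => by simp [Matrix.mulVec, dotProduct]
  rw [he]
  exact ContDiff.sum fun i _ => ContDiff.sum fun j _ =>
    contDiff_const.mul (netFwd_contDiff m arch A b hm L j)

end Net

/-- A normalized RePU network (`m ≥ 2`, hidden layers with
`‖(A_ℓ, b_ℓ)‖_∞ ≤ 1`) is continuously differentiable, with gradient ℓ¹-norm bounded by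
`m^L ‖A_L‖_∞` on `𝒳 = {‖x‖_∞ ≤ 1}` and gradient Lipschitz modulus at most
`L m^{2L} ‖A_L‖_∞` there.  (Here `Fin (arch 0) → ℝ` carries the sup norm.) -/
theorem stmt13 (d m L : ℕ) (hd : 0 < d) (hm : 2 ≤ m) (hL : 1 ≤ L)
    (arch : ℕ → ℕ) (h0 : arch 0 = d) (hout : arch (L + 1) = 1)
    (A : ∀ ℓ : ℕ, Matrix (Fin (arch (ℓ + 1))) (Fin (arch ℓ)) ℝ)
    (b : ∀ ℓ : ℕ, Fin (arch (ℓ + 1)) → ℝ)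
    (hnorm : ∀ ℓ, ℓ < L → augInfNorm (A ℓ) (b ℓ) ≤ 1) :
    ContDiff ℝ 1 (netOut m arch A b L) ∧
    (∀ x : Fin (arch 0) → ℝ, ‖x‖ ≤ 1 →
      (∑ i, |fderiv ℝ (netOut m arch A b L) x (Pi.single i 1)|)
        ≤ (m : ℝ) ^ L * matInfNorm (A L)) ∧
    (∀ x y : Fin (arch 0) → ℝ, ‖x‖ ≤ 1 → ‖y‖ ≤ 1 →
      (∑ i, |fderiv ℝ (netOut m arch A b L) x (Pi.single i 1)
          - fderiv ℝ (netOut m arch A b L) y (Pi.single i 1)|)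
        ≤ (L : ℝ) * (m : ℝ) ^ (2 * L) * matInfNorm (A L) * ‖x - y‖) := by
  have hL1 : 0 < arch (L + 1) := by omega
  let i0 : Fin (arch (L + 1)) := ⟨0, hL1⟩
  have hv : (i0 : ℕ) = 0 := rfl
  have huniq : ∀ i' : Fin (arch (L + 1)), i' = i0 := by
    intro i'
    have h1 := i'.isLt
    exact Fin.ext (by omega)
  have hsum : ∀ f : Fin (arch (L + 1)) → ℝ, (∑ i, f i) = f i0 := fun f =>
    Finset.sum_eq_single_of_mem i0 (Finset.mem_univ i0) fun c _ hc => absurd (huniq c) hc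
  have hrowsup : (∑ j, |A L i0 j|) ≤ matInfNorm (A L) := by
    have h := le_ciSup (f := fun i : Fin (arch (L+1)) => ∑ j, |A L i j|)
      ((Set.finite_range _).bddAbove) i0
    rw [matInfNorm]
    exact h
  refine ⟨netOut_contDiff m arch A b hm L, ?_, ?_⟩
  · intro x hx
    calc (∑ k, |fderiv ℝ (netOut m arch A b L) x (Pi.single k 1)|)
        = ∑ k, |∑ j, A L i0 j * grad m arch A b x L j k| := by
          refine Finset.sum_congr rfl fun k _ => ?_
          rw [netOut_fderiv_single m arch A b hm L x k, hsum]
      _ ≤ (∑ j, |A L i0 j|) * ((m:ℝ) ^ L) :=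
          sum_abs_dot_le _ _ _ (fun j => grad_sum_le m arch A b hm L hnorm x hx L le_rfl j)
      _ ≤ matInfNorm (A L) * ((m:ℝ) ^ L) :=
          mul_le_mul_of_nonneg_right hrowsup (by positivity)
      _ = (m:ℝ) ^ L * matInfNorm (A L) := mul_comm _ _
  · intro x y hx hy
    calc (∑ k, |fderiv ℝ (netOut m arch A b L) x (Pi.single k 1)
            - fderiv ℝ (netOut m arch A b L) y (Pi.single k 1)|)
        = ∑ k, |∑ j, A L i0 j * (grad m arch A b x L j k - grad m arch A b y L j k)| := by
          refine Finset.sum_congr rfl fun k _ => ?_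
          rw [netOut_fderiv_single m arch A b hm L x k,
            netOut_fderiv_single m arch A b hm L y k, hsum, hsum,
            ← Finset.sum_sub_distrib]
          congr 1
          exact Finset.sum_congr rfl fun j _ => by ring
      _ ≤ (∑ j, |A L i0 j|) * ((L:ℝ) * (m:ℝ) ^ (2*L) * ‖x - y‖) :=
          sum_abs_dot_le _ _ _ (fun j => grad_lip m arch A b hm L hnorm x y hx hy L le_rfl j)
      _ ≤ matInfNorm (A L) * ((L:ℝ) * (m:ℝ) ^ (2*L) * ‖x - y‖) :=
          mul_le_mul_of_nonneg_right hrowsup (by positivity)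
      _ = (L:ℝ) * (m:ℝ) ^ (2 * L) * matInfNorm (A L) * ‖x - y‖ := by ring
end

section
/- Let d ∈ ℕ, m ∈ ℕ, 𝔹^d = { x ∈ ℝ^d : ‖x‖₂ ≤ 1 }, 𝕊^d = { u ∈ ℝ^{d+1} : ‖u‖₂ = 1 }, and let h : ℝ^{d+1} ∖ {0} → ℝ be continuously differentiable. Define u(x) = (x, 1)/√(1 + ‖x‖₂²) ∈ 𝕊^d and S_m(h)(x) = (1 + ‖x‖₂²)^{m/2} · h(u(x)) for x ∈ 𝔹^d, and for 1 ≤ i < j ≤ d+1 the angular derivatives D_{i,j}h(u) = u_i ∂_{u_j}h(u) − u_j ∂_{u_i}h(u). Then sup_{x ∈ 𝔹^d} |S_m(h)(x)| ≤ 2^{m/2} · sup_{u ∈ 𝕊^d} |h(u)|, and there exists a constant C > 0 depending only on m and d such that sup_{x ∈ 𝔹^d} ‖∇(S_m h)(x)‖_∞ ≤ C · ( sup_{u ∈ 𝕊^d} |h(u)| + Σ_{1 ≤ i < j ≤ d+1} sup_{u ∈ 𝕊^d} |D_{i,j}h(u)| ). -/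
/-- The operator `S_m`: `S_m(h)(x) = (1 + ‖x‖₂²)^{m/2} · h(u(x))` where
`u(x) = (x, 1)/√(1 + ‖x‖₂²)` lies on the unit sphere `𝕊^d ⊆ ℝ^{d+1}`. -/
noncomputable def Smop (m : ℕ) {d : ℕ} (h : (Fin (d + 1) → ℝ) → ℝ) (x : Fin d → ℝ) : ℝ :=
  (1 + ∑ i, x i ^ 2) ^ ((m : ℝ) / 2) *
    h (fun j => (Real.sqrt (1 + ∑ i, x i ^ 2))⁻¹ * (Fin.snoc x 1 : Fin (d + 1) → ℝ) j)

/-- Angular derivative `D_{i,j}h(u) = u_i ∂_{u_j}h(u) − u_j ∂_{u_i}h(u)`. -/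
noncomputable def angDeriv {d : ℕ} (i j : Fin (d + 1)) (h : (Fin (d + 1) → ℝ) → ℝ)
    (u : Fin (d + 1) → ℝ) : ℝ :=
  u i * fderiv ℝ h u (Pi.single j 1) - u j * fderiv ℝ h u (Pi.single i 1)

/-- The Euclidean unit sphere `𝕊^d = {u ∈ ℝ^{d+1} : ‖u‖₂ = 1}`. -/
def eucSphere (d : ℕ) : Set (Fin (d + 1) → ℝ) := { u | ∑ j, u j ^ 2 = 1 }

set_option maxHeartbeats 1000000

open Finset

section helpers

lemma eucSphere_nonempty (d : ℕ) : (eucSphere d).Nonempty := by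
  refine ⟨Pi.single 0 1, ?_⟩
  simp [eucSphere, Pi.single_apply]

lemma eucSphere_sq_le {d : ℕ} {u : Fin (d+1) → ℝ} (hu : u ∈ eucSphere d) (j : Fin (d+1)) :
    u j ^ 2 ≤ 1 := by
  rw [← hu]
  exact Finset.single_le_sum (f := fun j => u j ^ 2) (fun k _ => sq_nonneg _) (mem_univ j)

lemma eucSphere_abs_le {d : ℕ} {u : Fin (d+1) → ℝ} (hu : u ∈ eucSphere d) (j : Fin (d+1)) :
    |u j| ≤ 1 := by
  have := eucSphere_sq_le hu j
  nlinarith [abs_nonneg (u j), sq_abs (u j)]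

lemma eucSphere_ne_zero {d : ℕ} {u : Fin (d+1) → ℝ} (hu : u ∈ eucSphere d) : u ≠ 0 := by
  intro h
  rw [h] at hu
  simp [eucSphere] at hu

lemma eucSphere_compact (d : ℕ) : IsCompact (eucSphere d) := by
  have hclosed : IsClosed (eucSphere d) := by
    have : eucSphere d = (fun u : Fin (d+1) → ℝ => ∑ j, u j ^ 2) ⁻¹' {1} := rfl
    rw [this]
    exact IsClosed.preimage (by continuity) isClosed_singleton
  have hbdd : eucSphere d ⊆ Metric.closedBall 0 1 := by
    intro u hu
    simp only [Metric.mem_closedBall, dist_zero_right]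
    rw [pi_norm_le_iff_of_nonneg zero_le_one]
    intro j
    simpa using eucSphere_abs_le hu j
  exact (isCompact_closedBall (0 : Fin (d+1) → ℝ) 1).of_isClosed_subset hclosed hbdd

lemma bddAbove_abs_image {d : ℕ} {f : (Fin (d+1) → ℝ) → ℝ}
    (hf : ContinuousOn f { u : Fin (d+1) → ℝ | u ≠ 0 }) :
    BddAbove ((fun u => |f u|) '' eucSphere d) :=
  (eucSphere_compact d).bddAbove_image
    ((hf.mono (fun u hu => eucSphere_ne_zero hu)).abs)

lemma sSup_abs_nonneg {d : ℕ} {f : (Fin (d+1) → ℝ) → ℝ}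
    (hb : BddAbove ((fun u => |f u|) '' eucSphere d)) :
    0 ≤ sSup ((fun u => |f u|) '' eucSphere d) := by
  obtain ⟨u, hu⟩ := eucSphere_nonempty d
  exact le_trans (abs_nonneg (f u)) (le_csSup hb ⟨u, hu, rfl⟩)

lemma le_sSup_abs {d : ℕ} {f : (Fin (d+1) → ℝ) → ℝ}
    (hb : BddAbove ((fun u => |f u|) '' eucSphere d))
    {u : Fin (d+1) → ℝ} (hu : u ∈ eucSphere d) :
    |f u| ≤ sSup ((fun v => |f v|) '' eucSphere d) :=
  le_csSup hb ⟨u, hu, rfl⟩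

noncomputable def Nfun {d : ℕ} (x : Fin d → ℝ) : ℝ := 1 + ∑ i, x i ^ 2

noncomputable def Ufun {d : ℕ} (x : Fin d → ℝ) : Fin (d+1) → ℝ :=
  fun j => (Real.sqrt (Nfun x))⁻¹ * (Fin.snoc x 1 : Fin (d + 1) → ℝ) j

lemma Nfun_ge_one {d : ℕ} (x : Fin d → ℝ) : 1 ≤ Nfun x := by
  have : 0 ≤ ∑ i, x i ^ 2 := Finset.sum_nonneg fun i _ => sq_nonneg _
  simp only [Nfun]; linarith

lemma Nfun_pos {d : ℕ} (x : Fin d → ℝ) : 0 < Nfun x := lt_of_lt_of_le one_pos (Nfun_ge_one x)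

lemma sqrt_Nfun_pos {d : ℕ} (x : Fin d → ℝ) : 0 < Real.sqrt (Nfun x) :=
  Real.sqrt_pos.2 (Nfun_pos x)

lemma Ufun_ne_zero {d : ℕ} (x : Fin d → ℝ) : Ufun x ≠ 0 := by
  intro hz
  have := congrFun hz (Fin.last d)
  simp only [Ufun, Fin.snoc_last, Pi.zero_apply, mul_one] at this
  exact (inv_pos.2 (sqrt_Nfun_pos x)).ne' this

lemma sum_snoc_sq {d : ℕ} (x : Fin d → ℝ) :
    ∑ j, (Fin.snoc x 1 : Fin (d + 1) → ℝ) j ^ 2 = Nfun x := by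
  rw [Fin.sum_univ_castSucc]
  simp [Nfun, add_comm]

lemma Ufun_mem_sum {d : ℕ} (x : Fin d → ℝ) : ∑ j, (Ufun x) j ^ 2 = 1 := by
  simp only [Ufun, mul_pow, ← Finset.mul_sum, sum_snoc_sq]
  rw [← Real.sqrt_inv, Real.sq_sqrt (inv_nonneg.2 (Nfun_pos x).le)]
  exact inv_mul_cancel₀ (Nfun_pos x).ne'

lemma Ufun_mem {d : ℕ} (x : Fin d → ℝ) : Ufun x ∈ eucSphere d := Ufun_mem_sum x

lemma Smop_eq {d : ℕ} (m : ℕ) (h : (Fin (d + 1) → ℝ) → ℝ) (x : Fin d → ℝ) :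
    Smop m h x = (Nfun x) ^ ((m : ℝ)/2) * h (Ufun x) := rfl

end helpers

section calculus

lemma hasDerivAt_Nfun_line {d : ℕ} (x : Fin d → ℝ) (i : Fin d) :
    HasDerivAt (fun t : ℝ => Nfun (x + t • (Pi.single i 1 : Fin d → ℝ))) (2 * x i) 0 := by
  have key : ∀ k : Fin d, HasDerivAt
      (fun t : ℝ => (x + t • (Pi.single i 1 : Fin d → ℝ)) k ^ 2)
      (2 * x k * (Pi.single i 1 : Fin d → ℝ) k) 0 := by
    intro k
    have h1 : HasDerivAt (fun t : ℝ => x k + t * (Pi.single i 1 : Fin d → ℝ) k)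
        ((Pi.single i 1 : Fin d → ℝ) k) 0 := by
      simpa using ((hasDerivAt_id (0:ℝ)).mul_const ((Pi.single i 1 : Fin d → ℝ) k)).const_add (x k)
    have := h1.pow 2
    simp only [Pi.add_apply, Pi.smul_apply, smul_eq_mul]
    refine this.congr_deriv ?_
    ring
  have hsum := HasDerivAt.fun_sum (fun k (_ : k ∈ Finset.univ) => key k)
  have := hsum.const_add (1:ℝ)
  simp only [Nfun]
  refine this.congr_deriv ?_
  rw [Finset.sum_eq_single i]
  · simp
  · intro b _ hb; simp [Pi.single_apply, hb]
  · simp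

lemma snoc_line {d : ℕ} (x : Fin d → ℝ) (i : Fin d) (t : ℝ) (j : Fin (d+1)) :
    (Fin.snoc (x + t • (Pi.single i 1 : Fin d → ℝ)) 1 : Fin (d+1) → ℝ) j
      = (Fin.snoc x 1 : Fin (d+1) → ℝ) j
        + t * (Pi.single (Fin.castSucc i) 1 : Fin (d+1) → ℝ) j := by
  induction j using Fin.lastCases with
  | last =>
      simp [Pi.single_eq_of_ne (Fin.castSucc_lt_last i).ne']
  | cast k =>
      simp only [Fin.snoc_castSucc, Pi.add_apply, Pi.smul_apply, smul_eq_mul]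
      rw [Pi.single_apply, Pi.single_apply]
      simp [Fin.castSucc_inj]

lemma hasDerivAt_Ufun_line {d : ℕ} (x : Fin d → ℝ) (i : Fin d) :
    HasDerivAt (fun t : ℝ => Ufun (x + t • (Pi.single i 1 : Fin d → ℝ)))
      ((-(x i) / (Nfun x * Real.sqrt (Nfun x))) • (Fin.snoc x 1 : Fin (d+1) → ℝ)
        + (Real.sqrt (Nfun x))⁻¹ • (Pi.single (Fin.castSucc i) 1 : Fin (d+1) → ℝ)) 0 := by
  have hN := hasDerivAt_Nfun_line x i
  have h0 : x + (0:ℝ) • (Pi.single i 1 : Fin d → ℝ) = x := by simp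
  have hsqrt : HasDerivAt (fun t : ℝ => Real.sqrt (Nfun (x + t • (Pi.single i 1 : Fin d → ℝ))))
      (1 / (2 * Real.sqrt (Nfun x)) * (2 * x i)) 0 := by
    have := (Real.hasDerivAt_sqrt (x := Nfun (x + (0:ℝ) • (Pi.single i 1 : Fin d → ℝ)))
      (by rw [h0]; exact (Nfun_pos x).ne')).comp 0 hN
    rw [h0] at this
    simpa [Function.comp_def] using this
  have hinv : HasDerivAt
      (fun t : ℝ => (Real.sqrt (Nfun (x + t • (Pi.single i 1 : Fin d → ℝ))))⁻¹)
      (-(x i) / (Nfun x * Real.sqrt (Nfun x))) 0 := by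
    have := hsqrt.inv (by rw [h0]; exact (sqrt_Nfun_pos x).ne')
    rw [h0] at this
    refine this.congr_deriv ?_
    rw [Real.sq_sqrt (Nfun_pos x).le]
    field_simp
  rw [hasDerivAt_pi]
  intro j
  have hcomp : HasDerivAt
      (fun t : ℝ => (Fin.snoc (x + t • (Pi.single i 1 : Fin d → ℝ)) 1 : Fin (d+1) → ℝ) j)
      ((Pi.single (Fin.castSucc i) 1 : Fin (d+1) → ℝ) j) 0 := by
    simp only [snoc_line]
    simpa using ((hasDerivAt_id (0:ℝ)).mul_const
      ((Pi.single (Fin.castSucc i) 1 : Fin (d+1) → ℝ) j)).const_add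
      ((Fin.snoc x 1 : Fin (d+1) → ℝ) j)
  have := hinv.mul hcomp
  rw [h0] at this
  simp only [Ufun, Pi.add_apply, Pi.smul_apply, smul_eq_mul]
  exact this

lemma h_differentiableAt {d : ℕ} {h : (Fin (d + 1) → ℝ) → ℝ}
    (hh : ContDiffOn ℝ 1 h { u : Fin (d+1) → ℝ | u ≠ 0 })
    {u : Fin (d+1) → ℝ} (hu : u ≠ 0) : DifferentiableAt ℝ h u := by
  have hopen : IsOpen { u : Fin (d+1) → ℝ | u ≠ 0 } := isOpen_compl_singleton
  exact (hh.contDiffAt (hopen.mem_nhds hu)).differentiableAt one_ne_zero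

lemma hasDerivAt_Smop_line {d m : ℕ} {h : (Fin (d + 1) → ℝ) → ℝ}
    (hh : ContDiffOn ℝ 1 h { u : Fin (d+1) → ℝ | u ≠ 0 }) (x : Fin d → ℝ) (i : Fin d) :
    HasDerivAt (fun t : ℝ => Smop m h (x + t • (Pi.single i 1 : Fin d → ℝ)))
      ((2 * x i) * ((m : ℝ)/2) * (Nfun x) ^ ((m : ℝ)/2 - 1) * h (Ufun x)
        + (Nfun x) ^ ((m : ℝ)/2) *
          fderiv ℝ h (Ufun x)
            ((-(x i) / (Nfun x * Real.sqrt (Nfun x))) • (Fin.snoc x 1 : Fin (d+1) → ℝ)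
              + (Real.sqrt (Nfun x))⁻¹ • (Pi.single (Fin.castSucc i) 1 : Fin (d+1) → ℝ))) 0 := by
  have h0 : x + (0:ℝ) • (Pi.single i 1 : Fin d → ℝ) = x := by simp
  have hN := hasDerivAt_Nfun_line x i
  have hphi : HasDerivAt
      (fun t : ℝ => (Nfun (x + t • (Pi.single i 1 : Fin d → ℝ))) ^ ((m : ℝ)/2))
      ((2 * x i) * ((m : ℝ)/2) * (Nfun x) ^ ((m : ℝ)/2 - 1)) 0 := by
    have := hN.rpow_const (p := (m : ℝ)/2) (by rw [h0]; exact Or.inl (Nfun_pos x).ne')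
    rw [h0] at this
    exact this
  have hU := hasDerivAt_Ufun_line x i
  have hdh := (h_differentiableAt hh (Ufun_ne_zero x)).hasFDerivAt
  have hcomp : HasDerivAt
      (fun t : ℝ => h (Ufun (x + t • (Pi.single i 1 : Fin d → ℝ))))
      (fderiv ℝ h (Ufun x)
        ((-(x i) / (Nfun x * Real.sqrt (Nfun x))) • (Fin.snoc x 1 : Fin (d+1) → ℝ)
          + (Real.sqrt (Nfun x))⁻¹ • (Pi.single (Fin.castSucc i) 1 : Fin (d+1) → ℝ))) 0 := by
    have hdh' : HasFDerivAt h (fderiv ℝ h (Ufun x))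
        (Ufun (x + (0:ℝ) • (Pi.single i 1 : Fin d → ℝ))) := by rw [h0]; exact hdh
    exact hdh'.comp_hasDerivAt 0 hU
  have := hphi.mul hcomp
  rw [h0] at this
  exact this

lemma differentiableAt_Smop {d m : ℕ} {h : (Fin (d + 1) → ℝ) → ℝ}
    (hh : ContDiffOn ℝ 1 h { u : Fin (d+1) → ℝ | u ≠ 0 }) (x : Fin d → ℝ) :
    DifferentiableAt ℝ (Smop m h) x := by
  have dN : DifferentiableAt ℝ (Nfun (d := d)) x := by
    refine (differentiableAt_const (1:ℝ)).add ?_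
    exact DifferentiableAt.fun_sum fun k _ => (differentiableAt_apply k x).fun_pow 2
  have dphi : DifferentiableAt ℝ (fun y : Fin d → ℝ => (Nfun y) ^ ((m : ℝ)/2)) x :=
    dN.rpow_const (Or.inl (Nfun_pos x).ne')
  have dU : DifferentiableAt ℝ (Ufun (d := d)) x := by
    rw [differentiableAt_pi]
    intro j
    refine DifferentiableAt.mul ((dN.sqrt (Nfun_pos x).ne').inv (sqrt_Nfun_pos x).ne') ?_
    induction j using Fin.lastCases with
    | last => simpa using differentiableAt_const (1:ℝ)
    | cast k => simpa using differentiableAt_apply k x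
  have dh := h_differentiableAt hh (Ufun_ne_zero x)
  exact dphi.mul (dh.comp x dU)

lemma fderiv_Smop_single {d m : ℕ} {h : (Fin (d + 1) → ℝ) → ℝ}
    (hh : ContDiffOn ℝ 1 h { u : Fin (d+1) → ℝ | u ≠ 0 }) (x : Fin d → ℝ) (i : Fin d) :
    fderiv ℝ (Smop m h) x (Pi.single i 1)
      = (2 * x i) * ((m : ℝ)/2) * (Nfun x) ^ ((m : ℝ)/2 - 1) * h (Ufun x)
        + (Nfun x) ^ ((m : ℝ)/2) *
          fderiv ℝ h (Ufun x)
            ((-(x i) / (Nfun x * Real.sqrt (Nfun x))) • (Fin.snoc x 1 : Fin (d+1) → ℝ)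
              + (Real.sqrt (Nfun x))⁻¹ • (Pi.single (Fin.castSucc i) 1 : Fin (d+1) → ℝ)) := by
  have hline : HasDerivAt (fun t : ℝ => x + t • (Pi.single i 1 : Fin d → ℝ))
      (Pi.single i 1 : Fin d → ℝ) 0 := by
    simpa using ((hasDerivAt_id (0:ℝ)).smul_const (Pi.single i 1 : Fin d → ℝ)).const_add x
  have hS := (differentiableAt_Smop (m := m) hh x).hasFDerivAt
  have hS' : HasFDerivAt (Smop m h) (fderiv ℝ (Smop m h) x)
      (x + (0:ℝ) • (Pi.single i 1 : Fin d → ℝ)) := by simpa using hS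
  have h1 := hS'.comp_hasDerivAt 0 hline
  exact h1.unique (hasDerivAt_Smop_line hh x i)

lemma fderiv_apply_self {d : ℕ} (L : (Fin (d+1) → ℝ) →L[ℝ] ℝ) (u : Fin (d+1) → ℝ) :
    L u = ∑ j, u j * L (Pi.single j 1) := by
  have hu : u = ∑ j, u j • (Pi.single j 1 : Fin (d+1) → ℝ) := by
    funext k
    rw [Finset.sum_apply]
    simp [Pi.single_apply, eq_comm]
  conv_lhs => rw [hu]
  rw [map_sum]
  simp [smul_eq_mul]

lemma tangent_identity {d : ℕ} (h : (Fin (d + 1) → ℝ) → ℝ) (u : Fin (d+1) → ℝ)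
    (hu : ∑ j, u j ^ 2 = 1) (i' : Fin (d+1)) :
    fderiv ℝ h u (Pi.single i' 1) - u i' * fderiv ℝ h u u
      = ∑ j, u j * angDeriv j i' h u := by
  set L := fderiv ℝ h u
  have : ∑ j, u j * angDeriv j i' h u
      = (∑ j, u j ^ 2) * L (Pi.single i' 1) - u i' * ∑ j, u j * L (Pi.single j 1) := by
    rw [Finset.sum_mul, Finset.mul_sum, ← Finset.sum_sub_distrib]
    refine Finset.sum_congr rfl fun j _ => ?_
    simp only [angDeriv]
    ring
  rw [this, hu, one_mul, ← fderiv_apply_self L u]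

lemma fderiv_Smop_single' {d m : ℕ} {h : (Fin (d + 1) → ℝ) → ℝ}
    (hh : ContDiffOn ℝ 1 h { u : Fin (d+1) → ℝ | u ≠ 0 }) (x : Fin d → ℝ) (i : Fin d) :
    fderiv ℝ (Smop m h) x (Pi.single i 1)
      = (m : ℝ) * x i * (Nfun x) ^ ((m : ℝ)/2 - 1) * h (Ufun x)
        + (Nfun x) ^ ((m : ℝ)/2) * (Real.sqrt (Nfun x))⁻¹ *
            ∑ j, (Ufun x) j * angDeriv j (Fin.castSucc i) h (Ufun x) := by
  rw [fderiv_Smop_single hh x i]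
  set u := Ufun x with hu_def
  set L := fderiv ℝ h u with hL_def
  have hs : Real.sqrt (Nfun x) ≠ 0 := (sqrt_Nfun_pos x).ne'
  have hsq : Real.sqrt (Nfun x) * Real.sqrt (Nfun x) = Nfun x :=
    Real.mul_self_sqrt (Nfun_pos x).le
  have hsnoc_eq : (Fin.snoc x 1 : Fin (d+1) → ℝ) = Real.sqrt (Nfun x) • u := by
    funext j
    simp only [hu_def, Ufun, Pi.smul_apply, smul_eq_mul]
    rw [← mul_assoc, mul_inv_cancel₀ hs, one_mul]
  have hsum : ∑ j, (u j) ^ 2 = 1 := Ufun_mem_sum x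
  have hxui : x i = Real.sqrt (Nfun x) * u (Fin.castSucc i) := by
    simp only [hu_def, Ufun, Fin.snoc_castSucc]
    rw [← mul_assoc, mul_inv_cancel₀ hs, one_mul]
  rw [hsnoc_eq]
  simp only [map_add, map_smul, smul_eq_mul]
  have hTI := tangent_identity h u hsum (Fin.castSucc i)
  rw [← hL_def] at hTI
  have key : -x i / (Nfun x * Real.sqrt (Nfun x)) * (Real.sqrt (Nfun x) * L u)
      + (Real.sqrt (Nfun x))⁻¹ * L (Pi.single (Fin.castSucc i) 1)
      = (Real.sqrt (Nfun x))⁻¹ * ∑ j, u j * angDeriv j (Fin.castSucc i) h u := by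
    rw [← hTI, hxui, ← hsq]
    field_simp
    rw [Real.sq_sqrt (sq_nonneg _)]
    ring
  rw [key]
  ring

end calculus

section bounds

lemma bddAbove_angDeriv {d : ℕ} {h : (Fin (d + 1) → ℝ) → ℝ}
    (hh : ContDiffOn ℝ 1 h { u : Fin (d+1) → ℝ | u ≠ 0 }) (a b : Fin (d+1)) :
    BddAbove ((fun u => |angDeriv a b h u|) '' eucSphere d) := by
  apply bddAbove_abs_image
  have hfd : ContinuousOn (fderiv ℝ h) { u : Fin (d+1) → ℝ | u ≠ 0 } :=
    hh.continuousOn_fderiv_of_isOpen isOpen_compl_singleton le_rfl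
  exact ((continuous_apply a).continuousOn.mul (hfd.clm_apply continuousOn_const)).sub
    ((continuous_apply b).continuousOn.mul (hfd.clm_apply continuousOn_const))

lemma sum_ang_le {d : ℕ} {h : (Fin (d + 1) → ℝ) → ℝ}
    (hh : ContDiffOn ℝ 1 h { u : Fin (d+1) → ℝ | u ≠ 0 }) (i' : Fin (d+1))
    {u : Fin (d+1) → ℝ} (hu : u ∈ eucSphere d) :
    ∑ j, |angDeriv j i' h u| ≤
      ∑ p ∈ Finset.univ.filter (fun p : Fin (d + 1) × Fin (d + 1) => p.1 < p.2),
        sSup ((fun u => |angDeriv p.1 p.2 h u|) '' eucSphere d) := by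
  set S : Fin (d+1) × Fin (d+1) → ℝ :=
    fun p => sSup ((fun u => |angDeriv p.1 p.2 h u|) '' eucSphere d) with hS_def
  set P : Fin (d+1) → Fin (d+1) × Fin (d+1) :=
    fun j => if j < i' then (j, i') else (i', j) with hP_def
  have h1 : ∑ j, |angDeriv j i' h u| = ∑ j ∈ Finset.univ.erase i', |angDeriv j i' h u| := by
    rw [← Finset.add_sum_erase Finset.univ _ (Finset.mem_univ i')]
    simp [angDeriv]
  have h2 : ∀ j ∈ Finset.univ.erase i', |angDeriv j i' h u| ≤ S (P j) := by
    intro j hj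
    have hjne : j ≠ i' := Finset.ne_of_mem_erase hj
    rcases lt_or_gt_of_ne hjne with hlt | hgt
    · simp only [hS_def, hP_def, if_pos hlt]
      exact le_sSup_abs (bddAbove_angDeriv hh j i') hu
    · simp only [hS_def, hP_def, if_neg (not_lt.2 hgt.le)]
      rw [show angDeriv j i' h u = -(angDeriv i' j h u) by
        simp only [angDeriv]; ring, abs_neg]
      exact le_sSup_abs (bddAbove_angDeriv hh i' j) hu
  have hinj : ∀ a ∈ Finset.univ.erase i', ∀ b ∈ Finset.univ.erase i', P a = P b → a = b := by
    intro a ha b hb hab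
    have hane : a ≠ i' := Finset.ne_of_mem_erase ha
    have hbne : b ≠ i' := Finset.ne_of_mem_erase hb
    by_cases ha' : a < i' <;> by_cases hb' : b < i' <;>
      simp only [hP_def, ha', hb', if_pos, if_neg, if_true, if_false, Prod.mk.injEq] at hab
    · exact hab.1
    · exact absurd hab.1 hane
    · exact absurd hab.2 hane
    · exact hab.2
  have hsub : (Finset.univ.erase i').image P ⊆
      Finset.univ.filter (fun p : Fin (d + 1) × Fin (d + 1) => p.1 < p.2) := by
    intro p hp
    obtain ⟨j, hj, rfl⟩ := Finset.mem_image.1 hp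
    have hjne : j ≠ i' := Finset.ne_of_mem_erase hj
    rcases lt_or_gt_of_ne hjne with hlt | hgt
    · simp [hP_def, if_pos hlt, hlt]
    · simp [hP_def, if_neg (not_lt.2 hgt.le), hgt]
  have hnn : ∀ p : Fin (d+1) × Fin (d+1), 0 ≤ S p :=
    fun p => sSup_abs_nonneg (bddAbove_angDeriv hh p.1 p.2)
  calc ∑ j, |angDeriv j i' h u|
      = ∑ j ∈ Finset.univ.erase i', |angDeriv j i' h u| := h1
    _ ≤ ∑ j ∈ Finset.univ.erase i', S (P j) := Finset.sum_le_sum h2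
    _ = ∑ p ∈ (Finset.univ.erase i').image P, S p := (Finset.sum_image hinj).symm
    _ ≤ ∑ p ∈ Finset.univ.filter (fun p : Fin (d + 1) × Fin (d + 1) => p.1 < p.2), S p :=
        Finset.sum_le_sum_of_subset_of_nonneg hsub (fun p _ _ => hnn p)

end bounds

/-- Bounds for the operator `S_m` on `𝔹^d = {‖x‖₂ ≤ 1}`:
`sup_{𝔹^d} |S_m h| ≤ 2^{m/2}·sup_{𝕊^d}|h|`, and there is `C = C(m, d) > 0` with
`sup_{𝔹^d} ‖∇(S_m h)‖_∞ ≤ C·(sup_{𝕊^d}|h| + Σ_{i<j} sup_{𝕊^d}|D_{i,j}h|)` for every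
`h` continuously differentiable away from the origin. -/
theorem stmt14 (d m : ℕ) (hd : 0 < d) (hm : 1 ≤ m) :
    (∀ h : (Fin (d + 1) → ℝ) → ℝ, ContDiffOn ℝ 1 h { u | u ≠ 0 } →
      ∀ x : Fin d → ℝ, (∑ i, x i ^ 2) ≤ 1 →
        |Smop m h x| ≤ 2 ^ ((m : ℝ) / 2) * sSup ((fun u => |h u|) '' eucSphere d)) ∧
    ∃ C : ℝ, 0 < C ∧
      ∀ h : (Fin (d + 1) → ℝ) → ℝ, ContDiffOn ℝ 1 h { u | u ≠ 0 } →
      ∀ x : Fin d → ℝ, (∑ i, x i ^ 2) ≤ 1 → ∀ i : Fin d,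
        |fderiv ℝ (Smop m h) x (Pi.single i 1)| ≤
          C * (sSup ((fun u => |h u|) '' eucSphere d)
            + ∑ p ∈ Finset.univ.filter (fun p : Fin (d + 1) × Fin (d + 1) => p.1 < p.2),
                sSup ((fun u => |angDeriv p.1 p.2 h u|) '' eucSphere d)) := by
  constructor
  · intro h hh x hx
    have hbA : BddAbove ((fun u => |h u|) '' eucSphere d) :=
      bddAbove_abs_image hh.continuousOn
    have hhu : |h (Ufun x)| ≤ sSup ((fun u => |h u|) '' eucSphere d) :=
      le_sSup_abs hbA (Ufun_mem x)
    have hN2 : Nfun x ≤ 2 := by simp only [Nfun]; linarith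
    have hpow : (Nfun x) ^ ((m : ℝ)/2) ≤ 2 ^ ((m : ℝ)/2) :=
      Real.rpow_le_rpow (Nfun_pos x).le hN2 (by positivity)
    rw [Smop_eq, abs_mul, abs_of_nonneg (Real.rpow_nonneg (Nfun_pos x).le _)]
    exact mul_le_mul hpow hhu (abs_nonneg _) (Real.rpow_nonneg (by norm_num) _)
  · refine ⟨((m : ℝ) + 1) * 2 ^ m, by positivity, ?_⟩
    intro h hh x hx i
    set A := sSup ((fun u => |h u|) '' eucSphere d) with hA_def
    set B := ∑ p ∈ Finset.univ.filter (fun p : Fin (d + 1) × Fin (d + 1) => p.1 < p.2),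
        sSup ((fun u => |angDeriv p.1 p.2 h u|) '' eucSphere d) with hB_def
    have hbA : BddAbove ((fun u => |h u|) '' eucSphere d) :=
      bddAbove_abs_image hh.continuousOn
    have hA0 : 0 ≤ A := sSup_abs_nonneg hbA
    have hB0 : 0 ≤ B :=
      Finset.sum_nonneg fun p _ => sSup_abs_nonneg (bddAbove_angDeriv hh p.1 p.2)
    have hu := Ufun_mem x
    have hhu : |h (Ufun x)| ≤ A := le_sSup_abs hbA hu
    have hxi : |x i| ≤ 1 := by
      have h1 : x i ^ 2 ≤ 1 :=
        le_trans (Finset.single_le_sum (f := fun k => x k ^ 2)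
          (fun k _ => sq_nonneg _) (Finset.mem_univ i)) hx
      nlinarith [abs_nonneg (x i), sq_abs (x i)]
    have hN2 : Nfun x ≤ 2 := by simp only [Nfun]; linarith
    have h2m : ((2 : ℝ) ^ (m : ℕ)) = (2 : ℝ) ^ ((m : ℝ)) := (Real.rpow_natCast 2 m).symm
    have hpow1 : (Nfun x) ^ ((m : ℝ)/2) ≤ 2 ^ m := by
      rw [h2m]
      calc (Nfun x) ^ ((m : ℝ)/2) ≤ (2:ℝ) ^ ((m : ℝ)/2) :=
            Real.rpow_le_rpow (Nfun_pos x).le hN2 (by positivity)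
        _ ≤ (2:ℝ) ^ ((m : ℝ)) :=
            Real.rpow_le_rpow_of_exponent_le one_le_two (by
              have : (0:ℝ) ≤ (m:ℝ) := Nat.cast_nonneg m
              linarith)
    have hpow2 : (Nfun x) ^ ((m : ℝ)/2 - 1) ≤ 2 ^ m := by
      rcases le_or_gt 0 ((m : ℝ)/2 - 1) with ht | ht
      · rw [h2m]
        calc (Nfun x) ^ ((m : ℝ)/2 - 1) ≤ (2:ℝ) ^ ((m : ℝ)/2 - 1) :=
              Real.rpow_le_rpow (Nfun_pos x).le hN2 ht
          _ ≤ (2:ℝ) ^ ((m : ℝ)) :=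
              Real.rpow_le_rpow_of_exponent_le one_le_two (by
                have : (0:ℝ) ≤ (m:ℝ) := Nat.cast_nonneg m
                linarith)
      · calc (Nfun x) ^ ((m : ℝ)/2 - 1) ≤ 1 :=
              Real.rpow_le_one_of_one_le_of_nonpos (Nfun_ge_one x) ht.le
          _ ≤ 2 ^ m := one_le_pow₀ (one_le_two : (1:ℝ) ≤ 2)
    have hinv1 : (Real.sqrt (Nfun x))⁻¹ ≤ 1 := by
      rw [inv_le_one_iff₀]
      right
      calc (1:ℝ) = Real.sqrt 1 := Real.sqrt_one.symm
        _ ≤ Real.sqrt (Nfun x) := Real.sqrt_le_sqrt (Nfun_ge_one x)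
    have hsum_le : |∑ j, (Ufun x) j * angDeriv j (Fin.castSucc i) h (Ufun x)| ≤ B := by
      calc |∑ j, (Ufun x) j * angDeriv j (Fin.castSucc i) h (Ufun x)|
          ≤ ∑ j, |(Ufun x) j * angDeriv j (Fin.castSucc i) h (Ufun x)| :=
            Finset.abs_sum_le_sum_abs _ _
        _ ≤ ∑ j, |angDeriv j (Fin.castSucc i) h (Ufun x)| := by
            refine Finset.sum_le_sum fun j _ => ?_
            rw [abs_mul]
            have := eucSphere_abs_le hu j
            nlinarith [abs_nonneg (angDeriv j (Fin.castSucc i) h (Ufun x))]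
        _ ≤ B := sum_ang_le hh (Fin.castSucc i) hu
    rw [fderiv_Smop_single' hh x i]
    have hT1 : |(m : ℝ) * x i * (Nfun x) ^ ((m : ℝ)/2 - 1) * h (Ufun x)|
        ≤ (m : ℝ) * 2 ^ m * A := by
      rw [abs_mul, abs_mul, abs_mul, Nat.abs_cast,
        abs_of_nonneg (Real.rpow_nonneg (Nfun_pos x).le _)]
      calc (m : ℝ) * |x i| * (Nfun x) ^ ((m : ℝ)/2 - 1) * |h (Ufun x)|
          ≤ (m : ℝ) * 1 * (2 ^ m) * A := by
            have hm0 : (0:ℝ) ≤ (m:ℝ) := Nat.cast_nonneg m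
            have habs : (0:ℝ) ≤ |x i| := abs_nonneg _
            have hrp : (0:ℝ) ≤ (Nfun x) ^ ((m : ℝ)/2 - 1) := Real.rpow_nonneg (Nfun_pos x).le _
            have s1 : (m : ℝ) * |x i| ≤ (m : ℝ) * 1 := by nlinarith
            have s2 : (m : ℝ) * |x i| * (Nfun x) ^ ((m : ℝ)/2 - 1) ≤ (m : ℝ) * 1 * (2 ^ m) := by
              nlinarith [pow_pos (zero_lt_two : (0:ℝ) < 2) m]
            have s3 : (0:ℝ) ≤ (m : ℝ) * |x i| * (Nfun x) ^ ((m : ℝ)/2 - 1) := by positivity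
            nlinarith [abs_nonneg (h (Ufun x))]
        _ = (m : ℝ) * 2 ^ m * A := by ring
    have hT2 : |(Nfun x) ^ ((m : ℝ)/2) * (Real.sqrt (Nfun x))⁻¹ *
          ∑ j, (Ufun x) j * angDeriv j (Fin.castSucc i) h (Ufun x)| ≤ 2 ^ m * B := by
      rw [abs_mul, abs_mul, abs_of_nonneg (Real.rpow_nonneg (Nfun_pos x).le _),
        abs_of_nonneg (inv_nonneg.2 (sqrt_Nfun_pos x).le)]
      calc (Nfun x) ^ ((m : ℝ)/2) * (Real.sqrt (Nfun x))⁻¹ *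
            |∑ j, (Ufun x) j * angDeriv j (Fin.castSucc i) h (Ufun x)|
          ≤ (2 ^ m) * 1 * B := by gcongr
        _ = 2 ^ m * B := by ring
    have final : ∀ a b : ℝ, |a| ≤ (m : ℝ) * 2 ^ m * A → |b| ≤ 2 ^ m * B →
        |a + b| ≤ ((m : ℝ) + 1) * 2 ^ m * (A + B) := by
      intro a b h1 h2
      have h3 := abs_add_le a b
      have hp : (0:ℝ) < 2 ^ m := by positivity
      nlinarith [mul_nonneg (mul_nonneg (Nat.cast_nonneg (α := ℝ) m) hp.le) hB0,
        mul_nonneg hp.le hA0]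
    exact final _ _ hT1 hT2
end
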